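/- arXiv:1207.5255 — 5 statements merged into one kernel-verified Lean document; each statement's English description precedes it below -/
import Mathlib

section
/- Let G be a countable group and let {g_i} be a sequence in G. Suppose {C_i} (i ≥ 0) is an increasing sequence of finite subsets of G with C_i = C_i^{-1} for all i, C_i \ (C_{i-1})^5 nonempty for i ≥ 1, and g_i ∈ C_i \ (C_{i-1})^5 for each i ≥ 1. Then for any fixed g ∈ G, there are at most 2 pairs (i,j) with i ≠ j such that g_i · g · g_j^{-1} ∈ C_0. -/
open Pointwise

section Aux

variable {G : Type*} [Group G] [DecidableEq G]

private lemma mem_pow5' {C : Finset G} {a b c d e : G}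
    (ha : a ∈ C) (hb : b ∈ C) (hc : c ∈ C) (hd : d ∈ C) (he : e ∈ C) :
    a * b * c * d * e ∈ C ^ 5 := by
  have h5 : (C : Finset G) ^ 5 = C * C * C * C * C := by
    rw [pow_succ, pow_succ, pow_succ, pow_succ, pow_one]
  rw [h5]
  exact Finset.mul_mem_mul (Finset.mul_mem_mul (Finset.mul_mem_mul
    (Finset.mul_mem_mul ha hb) hc) hd) he

/-- If two solutions exist and the first coordinate of the first solution strictly
dominates all other indices, we get a contradiction. -/
private lemma auxL1 (C : ℕ → Finset G) (g_ : ℕ → G)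
    (hmono : ∀ i, C i ⊆ C (i + 1)) (hsym : ∀ i, (C i)⁻¹ = C i)
    (hg : ∀ i, g_ i ∈ C (i + 1) \ (C i) ^ 5) (g : G)
    {i j k l : ℕ} (hj : j < i) (hk : k < i) (hl : l < i)
    (h1 : g_ i * g * (g_ j)⁻¹ ∈ C 0) (h2 : g_ k * g * (g_ l)⁻¹ ∈ C 0) : False := by
  have hmono' : ∀ {a b : ℕ}, a ≤ b → C a ⊆ C b := fun {a b} h =>
    (monotone_nat_of_le_succ (fun n => hmono n)) h
  have hinv : ∀ {n : ℕ} {x : G}, x ∈ C n → x⁻¹ ∈ C n := by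
    intro n x hx; rw [← hsym n]; exact Finset.inv_mem_inv hx
  have hgi : ∀ {a b : ℕ}, a < b → g_ a ∈ C b := fun {a b} h =>
    hmono' h ((Finset.mem_sdiff.mp (hg a)).1)
  have key : g_ i = (g_ i * g * (g_ j)⁻¹) * g_ j * (g_ l)⁻¹ *
      (g_ k * g * (g_ l)⁻¹)⁻¹ * g_ k := by group
  have hmem : g_ i ∈ (C i) ^ 5 := by
    rw [key]
    exact mem_pow5' (hmono' (Nat.zero_le i) h1) (hgi hj) (hinv (hgi hl))
      (hinv (hmono' (Nat.zero_le i) h2)) (hgi hk)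
  exact absurd hmem ((Finset.mem_sdiff.mp (hg i)).2)

/-- Two solutions with the same first coordinate and different second coordinates
give a contradiction. -/
private lemma auxL2 (C : ℕ → Finset G) (g_ : ℕ → G)
    (hmono : ∀ i, C i ⊆ C (i + 1)) (hsym : ∀ i, (C i)⁻¹ = C i)
    (hg : ∀ i, g_ i ∈ C (i + 1) \ (C i) ^ 5) (g : G)
    {i j l : ℕ} (hjl : j < l)
    (h1 : g_ i * g * (g_ j)⁻¹ ∈ C 0) (h2 : g_ i * g * (g_ l)⁻¹ ∈ C 0) : False := by
  have hmono' : ∀ {a b : ℕ}, a ≤ b → C a ⊆ C b := fun {a b} h =>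
    (monotone_nat_of_le_succ (fun n => hmono n)) h
  have hinv : ∀ {n : ℕ} {x : G}, x ∈ C n → x⁻¹ ∈ C n := by
    intro n x hx; rw [← hsym n]; exact Finset.inv_mem_inv hx
  have hgi : ∀ {a b : ℕ}, a < b → g_ a ∈ C b := fun {a b} h =>
    hmono' h ((Finset.mem_sdiff.mp (hg a)).1)
  have key : g_ l = (g_ i * g * (g_ l)⁻¹)⁻¹ * (g_ i * g * (g_ j)⁻¹) * g_ j *
      (g_ i * g * (g_ j)⁻¹)⁻¹ * (g_ i * g * (g_ j)⁻¹) := by group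
  have hmem : g_ l ∈ (C l) ^ 5 := by
    rw [key]
    have h1' := hmono' (Nat.zero_le l) h1
    have h2' := hmono' (Nat.zero_le l) h2
    exact mem_pow5' (hinv h2') h1' (hgi hjl) (hinv h1') h1'
  exact absurd hmem ((Finset.mem_sdiff.mp (hg l)).2)

/-- Solutions can be "swapped" by inverting `g`. -/
private lemma auxswap (C : ℕ → Finset G) (g_ : ℕ → G)
    (hsym : ∀ i, (C i)⁻¹ = C i) (g : G) {i j : ℕ}
    (h : g_ i * g * (g_ j)⁻¹ ∈ C 0) : g_ j * g⁻¹ * (g_ i)⁻¹ ∈ C 0 := by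
  have : (g_ i * g * (g_ j)⁻¹)⁻¹ ∈ C 0 := by
    rw [← hsym 0]; exact Finset.inv_mem_inv h
  have e : (g_ i * g * (g_ j)⁻¹)⁻¹ = g_ j * g⁻¹ * (g_ i)⁻¹ := by group
  rwa [e] at this

/-- Two distinct solutions bounded by `m`, with the first containing `m`, must cross. -/
private lemma two_sol (C : ℕ → Finset G) (g_ : ℕ → G)
    (hmono : ∀ i, C i ⊆ C (i + 1)) (hsym : ∀ i, (C i)⁻¹ = C i)
    (hg : ∀ i, g_ i ∈ C (i + 1) \ (C i) ^ 5) (g : G)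
    {m i j k l : ℕ} (hi : i ≤ m) (hj : j ≤ m) (hk : k ≤ m) (hl : l ≤ m)
    (hm : i = m ∨ j = m) (hij : i ≠ j) (hkl : k ≠ l) (hdis : (i, j) ≠ (k, l))
    (h1 : g_ i * g * (g_ j)⁻¹ ∈ C 0) (h2 : g_ k * g * (g_ l)⁻¹ ∈ C 0) :
    (i = m ∧ l = m) ∨ (j = m ∧ k = m) := by
  rcases hm with him | hjm
  · -- i = m
    by_cases hlm : l = m
    · exact Or.inl ⟨him, hlm⟩
    · by_cases hkm : k = m
      · -- i = k = m, so same first coordinate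
        have hik : i = k := by omega
        subst hik
        have hjl : j ≠ l := by
          intro h; exact hdis (by rw [h])
        rcases lt_or_gt_of_ne hjl with h | h
        · exact absurd (auxL2 C g_ hmono hsym hg g h h1 h2) not_false
        · exact absurd (auxL2 C g_ hmono hsym hg g h h2 h1) not_false
      · -- j, k, l < i
        have hj' : j < i := by omega
        have hk' : k < i := by omega
        have hl' : l < i := by omega
        exact absurd (auxL1 C g_ hmono hsym hg g hj' hk' hl' h1 h2) not_false
  · -- j = m : use the swapped solutions for g⁻¹
    have h1' := auxswap C g_ hsym g h1
    have h2' := auxswap C g_ hsym g h2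
    by_cases hkm : k = m
    · exact Or.inr ⟨hjm, hkm⟩
    · by_cases hlm : l = m
      · -- j = l = m, same first coordinate of swapped solutions
        have hjl : j = l := by omega
        subst hjl
        have hik : i ≠ k := by
          intro h; exact hdis (by rw [h])
        rcases lt_or_gt_of_ne hik with h | h
        · exact absurd (auxL2 C g_ hmono hsym hg g⁻¹ h h1' h2') not_false
        · exact absurd (auxL2 C g_ hmono hsym hg g⁻¹ h h2' h1') not_false
      · -- i, k, l < j
        have hi' : i < j := by omega
        have hl' : l < j := by omega
        have hk' : k < j := by omega
        exact absurd (auxL1 C g_ hmono hsym hg g⁻¹ hi' hl' hk' h1' h2') not_false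

/-- Three pairwise distinct solutions, all bounded by `m` with the first containing `m`,
are impossible. -/
private lemma three_sol (C : ℕ → Finset G) (g_ : ℕ → G)
    (hmono : ∀ i, C i ⊆ C (i + 1)) (hsym : ∀ i, (C i)⁻¹ = C i)
    (hg : ∀ i, g_ i ∈ C (i + 1) \ (C i) ^ 5) (g : G)
    {m i j k l p q : ℕ}
    (hi : i ≤ m) (hj : j ≤ m) (hk : k ≤ m) (hl : l ≤ m) (hp : p ≤ m) (hq : q ≤ m)
    (hm : i = m ∨ j = m)
    (hij : i ≠ j) (hkl : k ≠ l) (hpq : p ≠ q)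
    (h12 : (i, j) ≠ (k, l)) (h13 : (i, j) ≠ (p, q)) (h23 : (k, l) ≠ (p, q))
    (h1 : g_ i * g * (g_ j)⁻¹ ∈ C 0) (h2 : g_ k * g * (g_ l)⁻¹ ∈ C 0)
    (h3 : g_ p * g * (g_ q)⁻¹ ∈ C 0) : False := by
  have d12 := two_sol C g_ hmono hsym hg g hi hj hk hl hm hij hkl h12 h1 h2
  have d13 := two_sol C g_ hmono hsym hg g hi hj hp hq hm hij hpq h13 h1 h3
  rcases d12 with ⟨him, hlm⟩ | ⟨hjm, hkm⟩
  · rcases d13 with ⟨_, hqm⟩ | ⟨hjm, _⟩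
    · have d23 := two_sol C g_ hmono hsym hg g hk hl hp hq (Or.inr hlm) hkl hpq h23 h2 h3
      rcases d23 with ⟨hkm, hqm'⟩ | ⟨hlm', hpm⟩
      · exact hkl (by omega)
      · exact hpq (by omega)
    · exact hij (by omega)
  · rcases d13 with ⟨him, _⟩ | ⟨_, hpm⟩
    · exact hij (by omega)
    · have d23 := two_sol C g_ hmono hsym hg g hk hl hp hq (Or.inl hkm) hkl hpq h23 h2 h3
      rcases d23 with ⟨_, hqm⟩ | ⟨hlm, _⟩
      · exact hpq (by omega)
      · exact hkl (by omega)

end Aux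

/-- **Lemma (at most 2 solutions).** Let `G` be a countable group, `C i` an increasing
sequence of finite symmetric subsets with `C i \ (C (i-1))^5` nonempty, and `g_ i` a
sequence with `g_ i ∈ C (i+1) \ (C i)^5` (indices shifted so that every term of the
sequence satisfies the condition for `i ≥ 1`).  Then for any fixed `g ∈ G` there are at
most `2` pairs `(i, j)` with `i ≠ j` such that `g_ i * g * (g_ j)⁻¹ ∈ C 0`. -/
theorem at_most_two_solutions {G : Type*} [Group G] [Countable G] [DecidableEq G]
    (C : ℕ → Finset G) (g_ : ℕ → G)
    (hmono : ∀ i, C i ⊆ C (i + 1))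
    (hsym : ∀ i, (C i)⁻¹ = C i)
    (hne : ∀ i, (C (i + 1) \ (C i) ^ 5).Nonempty)
    (hg : ∀ i, g_ i ∈ C (i + 1) \ (C i) ^ 5)
    (g : G) :
    {p : ℕ × ℕ | p.1 ≠ p.2 ∧ g_ p.1 * g * (g_ p.2)⁻¹ ∈ C 0}.Finite ∧
      {p : ℕ × ℕ | p.1 ≠ p.2 ∧ g_ p.1 * g * (g_ p.2)⁻¹ ∈ C 0}.ncard ≤ 2 := by
  set S := {p : ℕ × ℕ | p.1 ≠ p.2 ∧ g_ p.1 * g * (g_ p.2)⁻¹ ∈ C 0} with hSdef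
  -- no three pairwise distinct elements of S
  have key : ∀ a ∈ S, ∀ b ∈ S, ∀ c ∈ S, a = b ∨ a = c ∨ b = c := by
    intro a ha b hb c hc
    by_contra hcon
    push_neg at hcon
    obtain ⟨hab, hac, hbc⟩ := hcon
    obtain ⟨ha1, ha2⟩ := ha
    obtain ⟨hb1, hb2⟩ := hb
    obtain ⟨hc1, hc2⟩ := hc
    set m := max (max a.1 a.2) (max (max b.1 b.2) (max c.1 c.2)) with hm
    have hle : a.1 ≤ m ∧ a.2 ≤ m ∧ b.1 ≤ m ∧ b.2 ≤ m ∧ c.1 ≤ m ∧ c.2 ≤ m := by omega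
    obtain ⟨l1, l2, l3, l4, l5, l6⟩ := hle
    have hwhich : (a.1 = m ∨ a.2 = m) ∨ (b.1 = m ∨ b.2 = m) ∨ (c.1 = m ∨ c.2 = m) := by
      omega
    have pab : (a.1, a.2) ≠ (b.1, b.2) := by simpa using hab
    have pac : (a.1, a.2) ≠ (c.1, c.2) := by simpa using hac
    have pbc : (b.1, b.2) ≠ (c.1, c.2) := by simpa using hbc
    rcases hwhich with hma | hmb | hmc
    · exact three_sol C g_ hmono hsym hg g l1 l2 l3 l4 l5 l6 hma ha1 hb1 hc1
        pab pac pbc ha2 hb2 hc2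
    · exact three_sol C g_ hmono hsym hg g l3 l4 l1 l2 l5 l6 hmb hb1 ha1 hc1
        pab.symm (by simpa using hbc) (by simpa using hac) hb2 ha2 hc2
    · exact three_sol C g_ hmono hsym hg g l5 l6 l1 l2 l3 l4 hmc hc1 ha1 hb1
        pac.symm pbc.symm pab hc2 ha2 hb2
  rcases Set.eq_empty_or_nonempty S with hS | ⟨a, ha⟩
  · rw [hS]; simp
  · by_cases hb : ∃ b ∈ S, b ≠ a
    · obtain ⟨b, hb, hba⟩ := hb
      have hsub : S ⊆ {a, b} := by
        intro x hx
        rcases key x hx a ha b hb with h | h | h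
        · exact Or.inl h
        · exact Or.inr h
        · exact absurd h.symm hba
      refine ⟨(Set.toFinite ({a, b} : Set (ℕ × ℕ))).subset hsub, ?_⟩
      calc S.ncard ≤ ({a, b} : Set (ℕ × ℕ)).ncard :=
            Set.ncard_le_ncard hsub (Set.toFinite _)
        _ ≤ ({b} : Set (ℕ × ℕ)).ncard + 1 := Set.ncard_insert_le a {b}
        _ ≤ 2 := by simp
    · push_neg at hb
      have hsub : S ⊆ {a} := fun x hx => hb x hx
      refine ⟨(Set.finite_singleton a).subset hsub, ?_⟩
      calc S.ncard ≤ ({a} : Set (ℕ × ℕ)).ncard :=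
            Set.ncard_le_ncard hsub (Set.finite_singleton a)
        _ ≤ 2 := by simp
end

section
/- Let G be an infinite group and let I, H ⊆ G be finite subsets. Then there exists an infinite collection {h_i} ⊆ G such that for every i and every g ∈ I, h_i^{-1} g h_i ∉ H \ {g}. -/
open scoped Pointwise


/-- **Lemma (conjugation avoidance).** Let `G` be a countably infinite group and
`I, H ⊆ G` finite subsets.  Then there exists an infinite collection `K ⊆ G` such that
for every `h ∈ K` and every `g ∈ I`, the conjugate `h⁻¹ * g * h` does not lie in
`H \ {g}`. -/
theorem conjugation_avoidance {G : Type*} [Group G] [Countable G] [Infinite G]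
    (I H : Finset G) :
    ∃ K : Set G, K.Infinite ∧
      ∀ h ∈ K, ∀ g ∈ I, h⁻¹ * g * h ∉ (H : Set G) \ {g} := by
  classical
  set Good : Set G := {h : G | ∀ g ∈ I, h⁻¹ * g * h ∉ (H : Set G) \ {g}} with hGood
  refine ⟨Good, ?_, fun h hh => hh⟩
  by_contra hfin
  rw [Set.not_infinite] at hfin
  -- Index type for the coset cover: good elements (singleton cosets of ⊥),
  -- plus triples (g, k, h₀) with k ≠ g and h₀⁻¹ * g * h₀ = k (cosets of conjugated
  -- centralizers).
  let T := {p : (G × G) × G // p.1.2 ≠ p.1.1 ∧ p.2⁻¹ * p.1.1 * p.2 = p.1.2}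
  let ι := G ⊕ T
  let K : ι → Subgroup G := fun i =>
    match i with
    | Sum.inl _ => ⊥
    | Sum.inr t => (Subgroup.centralizer {t.1.1.1}).map (MulAut.conj t.1.2⁻¹).toMonoidHom
  let c : ι → G := fun i =>
    match i with
    | Sum.inl x => x
    | Sum.inr t => t.1.2
  -- The finset of cosets used in the cover
  let f : G × G → Finset ι := fun p =>
    if hc : p.2 ≠ p.1 ∧ ∃ h₀ : G, h₀⁻¹ * p.1 * h₀ = p.2 then
      {Sum.inr ⟨(p, hc.2.choose), hc.1, hc.2.choose_spec⟩} else ∅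
  let s : Finset ι := hfin.toFinset.image Sum.inl ∪ (I ×ˢ H).biUnion f
  have hcovers : ⋃ i ∈ s, c i • ((K i : Set G)) = Set.univ := by
    rw [Set.eq_univ_iff_forall]
    intro y
    rw [Set.mem_iUnion₂]
    by_cases hy : y ∈ Good
    · refine ⟨Sum.inl y, ?_, ?_⟩
      · exact Finset.mem_union_left _ (Finset.mem_image_of_mem _ (hfin.mem_toFinset.mpr hy))
      · rw [mem_leftCoset_iff]
        simp [K, c]
    · rw [hGood, Set.mem_setOf_eq] at hy
      push_neg at hy
      obtain ⟨g, hgI, hgk⟩ := hy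
      set k : G := y⁻¹ * g * y with hk
      obtain ⟨hkH, hkg⟩ := hgk
      rw [Set.mem_singleton_iff] at hkg
      have hc : k ≠ g ∧ ∃ h₀ : G, h₀⁻¹ * g * h₀ = k := ⟨hkg, y, rfl⟩
      set h₀ : G := hc.2.choose with hh₀
      have hspec : h₀⁻¹ * g * h₀ = k := hc.2.choose_spec
      refine ⟨Sum.inr ⟨((g, k), h₀), hc.1, hspec⟩, ?_, ?_⟩
      · refine Finset.mem_union_right _ (Finset.mem_biUnion.mpr ⟨(g, k), ?_, ?_⟩)
        · exact Finset.mem_product.mpr ⟨hgI, hkH⟩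
        · simp only [f, dif_pos hc, Finset.mem_singleton]; rfl
      · have hmem2 : h₀⁻¹ * y ∈
            (Subgroup.centralizer {g}).map (MulAut.conj h₀⁻¹).toMonoidHom := by
          refine Subgroup.mem_map.mpr ⟨y * h₀⁻¹, ?_, ?_⟩
          · rw [Subgroup.mem_centralizer_singleton_iff]
            have h1 : y⁻¹ * g * y = h₀⁻¹ * g * h₀ := hspec.symm
            have h2 : g * y = y * (h₀⁻¹ * g * h₀) := by rw [← h1]; group
            calc (y * h₀⁻¹) * g = y * (h₀⁻¹ * g * h₀) * h₀⁻¹ * (h₀ * h₀⁻¹) := by group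
              _ = (g * y) * h₀⁻¹ * (h₀ * h₀⁻¹) := by rw [← h2]
              _ = g * (y * h₀⁻¹) := by group
          · show h₀⁻¹ * (y * h₀⁻¹) * h₀⁻¹⁻¹ = h₀⁻¹ * y
            group
        rw [mem_leftCoset_iff]
        simpa only [K, SetLike.mem_coe] using hmem2
  have hfiltered := Subgroup.leftCoset_cover_filter_FiniteIndex (H := K) (g := c) hcovers
  have h1 : (1 : G) ∈ ⋃ i ∈ s.filter (fun i => (K i).FiniteIndex), c i • (K i : Set G) :=
    hfiltered ▸ Set.mem_univ 1
  rw [Set.mem_iUnion₂] at h1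
  obtain ⟨i, hi, hmem⟩ := h1
  rw [Finset.mem_filter] at hi
  obtain ⟨-, hfi⟩ := hi
  match i with
  | Sum.inl x =>
      have : ((⊥ : Subgroup G)).index = 0 := by
        rw [Subgroup.index_bot]
        exact Nat.card_eq_zero_of_infinite
      exact hfi.index_ne_zero this
  | Sum.inr ⟨((g, k), h₀), hkg, hspec⟩ =>
      rw [mem_leftCoset_iff] at hmem
      have hmem' : h₀⁻¹ * 1 ∈
          (Subgroup.centralizer {g}).map (MulAut.conj h₀⁻¹).toMonoidHom := hmem
      obtain ⟨z, hz, hzeq⟩ := Subgroup.mem_map.mp hmem'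
      have h3 : h₀⁻¹ * (z * h₀) = h₀⁻¹ * 1 := by
        have : h₀⁻¹ * z * h₀⁻¹⁻¹ = h₀⁻¹ * 1 := hzeq
        rw [inv_inv] at this
        rw [← mul_assoc]
        exact this
      have h4 : z * h₀ = 1 := mul_left_cancel h3
      have hzval : z = h₀⁻¹ := eq_inv_of_mul_eq_one_left h4
      rw [hzval, Subgroup.mem_centralizer_singleton_iff] at hz
      refine hkg ?_
      show k = g
      have hspec' : h₀⁻¹ * g * h₀ = k := hspec
      rw [← hspec', hz]
      group
end

section
/- The set M_G of mixing actions of a countable group G, equipped with the lead metric m(T,S) = d(T,S) + sup_{g∈G} a(T^g, S^g), is a separable metric space. -/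
open MeasureTheory Filter Topology
open scoped symmDiff

variable {X : Type*} [MeasurableSpace X] {G : Type*} [Group G]

/-- The pseudometric `a(T,S) = Σ_{i,j} 2^{-(i+j)} |μ(T A_i ∩ A_j) − μ(S A_i ∩ A_j)|`. -/
noncomputable def aDist (μ : Measure X) (A : ℕ → Set X) (T S : X → X) : ℝ :=
  ∑' p : ℕ × ℕ, (1 / 2 : ℝ) ^ (p.1 + p.2) *
    |(μ (T '' A p.1 ∩ A p.2)).toReal - (μ (S '' A p.1 ∩ A p.2)).toReal|

/-- The weak metric `d` on `G`-actions. -/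
noncomputable def dDist (μ : Measure X) (A : ℕ → Set X) (len : G → ℕ)
    (T S : G → X → X) : ℝ :=
  ∑' g : G, (1 / 2 : ℝ) ^ len g * ∑' i : ℕ, (1 / 2 : ℝ) ^ i *
    ((μ ((T g '' A i) ∆ (S g '' A i))).toReal +
      (μ ((T g⁻¹ '' A i) ∆ (S g⁻¹ '' A i))).toReal)

/-- The lead metric `m(T,S) = d(T,S) + sup_g a(T^g, S^g)`. -/
noncomputable def mDist (μ : Measure X) (A : ℕ → Set X) (len : G → ℕ)
    (T S : G → X → X) : ℝ :=
  dDist μ A len T S + ⨆ g : G, aDist μ A (T g) (S g)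

/-- `T : G → X → X` is a measure-preserving action of the group `G`. -/
def IsMPAction (μ : Measure X) (T : G → X → X) : Prop :=
  (∀ g : G, MeasurePreserving (T g) μ μ) ∧
    (∀ g h : G, ∀ x : X, T (g * h) x = T g (T h x)) ∧ (∀ x : X, T 1 x = x)

/-- A `G`-action `T` is mixing (w.r.t. a proper length function `len`):
`μ(T^g A ∩ B) → μ(A)μ(B)` as `|g| → ∞`. -/
def Mixing (μ : Measure X) (len : G → ℕ) (T : G → X → X) : Prop :=
  ∀ A B : Set X, MeasurableSet A → MeasurableSet B → ∀ ε : ℝ, 0 < ε →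
    ∃ N : ℕ, ∀ g : G, N < len g →
      |(μ (T g '' A ∩ B)).toReal - (μ A).toReal * (μ B).toReal| < ε
set_option maxHeartbeats 1000000

section MixSepAux


variable {X : Type*} [MeasurableSpace X] {G : Type*} [Group G]

private lemma sum_geo : Summable (fun i : ℕ => (1/2:ℝ)^i) := summable_geometric_two

private lemma sum_geo_ite (I : ℕ) :
    Summable (fun i : ℕ => if I ≤ i then (1/2:ℝ)^i else 0) := by
  refine Summable.of_nonneg_of_le (fun i => ?_) (fun i => ?_) sum_geo
  · by_cases h : I ≤ i <;> simp [h] <;> positivity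
  · by_cases h : I ≤ i <;> simp [h] <;> positivity

set_option maxHeartbeats 1000000 in
private lemma geo_tail (I : ℕ) :
    ∑' i : ℕ, (if I ≤ i then (1/2:ℝ)^i else 0) = 2 * (1/2)^I := by
  have hinj : Function.Injective (fun j : ℕ => I + j) := fun a b h => by
    simpa using h
  have hsupp : Function.support (fun i : ℕ => if I ≤ i then (1/2:ℝ)^i else 0)
      ⊆ Set.range (fun j => I + j) := by
    intro x hx
    by_cases h : I ≤ x
    · exact ⟨x - I, by show I + (x - I) = x; omega⟩
    · simp [Function.mem_support, h] at hx
  have key := hinj.tsum_eq (f := fun i : ℕ => if I ≤ i then (1/2:ℝ)^i else 0) hsupp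
  rw [← key]
  have h2 : ∀ j : ℕ, (if I ≤ I + j then (1/2:ℝ)^(I+j) else 0) = (1/2:ℝ)^I * (1/2)^j := by
    intro j; rw [if_pos (Nat.le_add_right _ _), pow_add]
  calc ∑' (j : ℕ), (if I ≤ I + j then (1/2:ℝ)^(I+j) else 0)
      = ∑' (j : ℕ), (1/2:ℝ)^I * (1/2)^j := tsum_congr h2
    _ = (1/2:ℝ)^I * 2 := by rw [tsum_mul_left, tsum_geometric_two]
    _ = 2 * (1/2)^I := by ring

set_option maxHeartbeats 1000000 in
private lemma tsum_prod_mul {f1 f2 : ℕ → ℝ} (h1 : Summable f1) (h2 : Summable f2)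
    (h1n : ∀ i, 0 ≤ f1 i) (h2n : ∀ i, 0 ≤ f2 i) :
    ∑' p : ℕ × ℕ, f1 p.1 * f2 p.2 = (∑' i, f1 i) * (∑' j, f2 j) := by
  have step := Summable.tsum_prod' (f := fun p : ℕ × ℕ => f1 p.1 * f2 p.2)
    (h1.mul_of_nonneg h2 h1n h2n) (fun b => h2.mul_left (f1 b))
  rw [step]
  calc ∑' (b : ℕ) (c : ℕ), f1 b * f2 c
      = ∑' (b : ℕ), f1 b * ∑' (c : ℕ), f2 c := by
        exact tsum_congr (fun b => tsum_mul_left)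
    _ = (∑' i, f1 i) * (∑' j, f2 j) := tsum_mul_right

variable {μ : Measure X}

private lemma r_le_one [IsProbabilityMeasure μ] (E : Set X) : (μ E).toReal ≤ 1 := by
  have h : μ E ≤ 1 := prob_le_one
  simpa using ENNReal.toReal_mono (by simp) h

private lemma abs_diff_le_one [IsProbabilityMeasure μ] (E F : Set X) :
    |(μ E).toReal - (μ F).toReal| ≤ 1 := by
  rw [abs_sub_le_iff]
  have h1 := r_le_one (μ := μ) E
  have h2 := r_le_one (μ := μ) F
  have h3 : (0:ℝ) ≤ (μ E).toReal := ENNReal.toReal_nonneg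
  have h4 : (0:ℝ) ≤ (μ F).toReal := ENNReal.toReal_nonneg
  constructor <;> linarith

private lemma measure_toReal_le_add [IsProbabilityMeasure μ] {a b c : Set X}
    (h : μ a ≤ μ b + μ c) :
    (μ a).toReal ≤ (μ b).toReal + (μ c).toReal := by
  rw [← ENNReal.toReal_add (measure_ne_top μ b) (measure_ne_top μ c)]
  exact ENNReal.toReal_mono (ENNReal.add_ne_top.mpr ⟨measure_ne_top μ b, measure_ne_top μ c⟩) h

private lemma corr_diff_le [IsProbabilityMeasure μ] (E F C : Set X) :
    |(μ (E ∩ C)).toReal - (μ (F ∩ C)).toReal| ≤ (μ (E ∆ F)).toReal := by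
  have key : ∀ E' F' : Set X, μ (E' ∩ C) ≤ μ (F' ∩ C) + μ (E' ∆ F') := by
    intro E' F'
    refine le_trans (measure_mono ?_) (measure_union_le _ _)
    intro x hx
    by_cases hF : x ∈ F'
    · exact Or.inl ⟨hF, hx.2⟩
    · exact Or.inr (Set.mem_symmDiff.mpr (Or.inl ⟨hx.1, hF⟩))
  rw [abs_sub_le_iff]
  constructor
  · have := measure_toReal_le_add (μ := μ) (key E F); linarith
  · have := measure_toReal_le_add (μ := μ) (key F E)
    rw [symmDiff_comm F E] at this
    linarith

private lemma symmdiff_tri [IsProbabilityMeasure μ] (E B F : Set X) :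
    (μ (E ∆ F)).toReal ≤ (μ (E ∆ B)).toReal + (μ (B ∆ F)).toReal :=
  measure_toReal_le_add (le_trans (measure_mono (symmDiff_triangle E B F)) (measure_union_le _ _))

private lemma summable_prod_geo : Summable (fun p : ℕ×ℕ => (1/2:ℝ)^p.1 * (1/2:ℝ)^p.2) :=
  sum_geo.mul_of_nonneg sum_geo (fun i => by positivity) (fun i => by positivity)

private lemma summable_prod_ite1 (I : ℕ) :
    Summable (fun p : ℕ×ℕ => (if I ≤ p.1 then (1/2:ℝ)^p.1 else 0) * (1/2:ℝ)^p.2) :=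
  (sum_geo_ite I).mul_of_nonneg sum_geo
    (fun i => by by_cases h : I ≤ i <;> simp [h] <;> positivity) (fun i => by positivity)

private lemma summable_prod_ite2 (I : ℕ) :
    Summable (fun p : ℕ×ℕ => (1/2:ℝ)^p.1 * (if I ≤ p.2 then (1/2:ℝ)^p.2 else 0)) :=
  sum_geo.mul_of_nonneg (sum_geo_ite I)
    (fun i => by positivity) (fun i => by by_cases h : I ≤ i <;> simp [h] <;> positivity)

private lemma tsum_prod_geo : ∑' p : ℕ×ℕ, (1/2:ℝ)^p.1 * (1/2:ℝ)^p.2 = 4 := by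
  rw [tsum_prod_mul sum_geo sum_geo (fun i => by positivity) (fun i => by positivity),
    tsum_geometric_two]
  norm_num

private lemma tsum_prod_geo_ite1 (I : ℕ) :
    ∑' p : ℕ×ℕ, (if I ≤ p.1 then (1/2:ℝ)^p.1 else 0) * (1/2:ℝ)^p.2 = 4 * (1/2)^I := by
  rw [tsum_prod_mul (sum_geo_ite I) sum_geo
    (fun i => by by_cases h : I ≤ i <;> simp [h] <;> positivity) (fun i => by positivity),
    geo_tail, tsum_geometric_two]
  ring

private lemma tsum_prod_geo_ite2 (I : ℕ) :
    ∑' p : ℕ×ℕ, (1/2:ℝ)^p.1 * (if I ≤ p.2 then (1/2:ℝ)^p.2 else 0) = 4 * (1/2)^I := by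
  rw [tsum_prod_mul sum_geo (sum_geo_ite I)
    (fun i => by positivity) (fun i => by by_cases h : I ≤ i <;> simp [h] <;> positivity),
    geo_tail, tsum_geometric_two]
  ring

variable [IsProbabilityMeasure μ]

private lemma summable_aDist_term (A : ℕ → Set X) (T S : X → X) :
    Summable (fun p : ℕ×ℕ => (1/2:ℝ)^(p.1+p.2) *
      |(μ (T '' A p.1 ∩ A p.2)).toReal - (μ (S '' A p.1 ∩ A p.2)).toReal|) := by
  refine Summable.of_nonneg_of_le (fun p => by positivity) (fun p => ?_) summable_prod_geo
  rw [pow_add]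
  exact mul_le_of_le_one_right (by positivity) (abs_diff_le_one (μ := μ) _ _)

private lemma aDist_le_small (A : ℕ → Set X) (T S : X → X) (I : ℕ) (δ : ℝ) (hδ : 0 < δ)
    (h : ∀ i < I, (μ ((T '' A i) ∆ (S '' A i))).toReal ≤ 2*δ) :
    aDist μ A T S ≤ 16*δ + 4*(1/2:ℝ)^I := by
  have hsum2 : Summable (fun p : ℕ×ℕ => 4*δ*((1/2:ℝ)^p.1 * (1/2:ℝ)^p.2) +
      (if I ≤ p.1 then (1/2:ℝ)^p.1 else 0) * (1/2:ℝ)^p.2) :=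
    (summable_prod_geo.mul_left _).add (summable_prod_ite1 I)
  have hterm : ∀ p : ℕ×ℕ, (1/2:ℝ)^(p.1+p.2) *
      |(μ (T '' A p.1 ∩ A p.2)).toReal - (μ (S '' A p.1 ∩ A p.2)).toReal| ≤
      4*δ*((1/2:ℝ)^p.1 * (1/2:ℝ)^p.2) +
      (if I ≤ p.1 then (1/2:ℝ)^p.1 else 0) * (1/2:ℝ)^p.2 := by
    intro p
    rw [pow_add]
    have hw : (0:ℝ) ≤ (1/2:ℝ)^p.1 * (1/2:ℝ)^p.2 := by positivity
    rcases lt_or_ge p.1 I with hi | hi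
    · have hc := (corr_diff_le (μ := μ) (T '' A p.1) (S '' A p.1) (A p.2)).trans (h p.1 hi)
      have hib : (0:ℝ) ≤ (if I ≤ p.1 then (1/2:ℝ)^p.1 else 0) * (1/2:ℝ)^p.2 := by
        by_cases hI : I ≤ p.1 <;> simp [hI] <;> positivity
      nlinarith [abs_nonneg ((μ (T '' A p.1 ∩ A p.2)).toReal - (μ (S '' A p.1 ∩ A p.2)).toReal)]
    · rw [if_pos hi]
      have := abs_diff_le_one (μ := μ) (T '' A p.1 ∩ A p.2) (S '' A p.1 ∩ A p.2)
      nlinarith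
  refine le_trans (Summable.tsum_le_tsum hterm (summable_aDist_term (μ := μ) A T S) hsum2) ?_
  rw [Summable.tsum_add (summable_prod_geo.mul_left _) (summable_prod_ite1 I), tsum_mul_left,
    tsum_prod_geo, tsum_prod_geo_ite1]
  nlinarith [pow_nonneg (by norm_num : (0:ℝ) ≤ 1/2) I]

private lemma aDist_le_big (A : ℕ → Set X) (T S : X → X) (I : ℕ) (δ : ℝ) (hδ : 0 < δ)
    (hT : ∀ i < I, ∀ j < I,
      |(μ (T '' A i ∩ A j)).toReal - (μ (A i)).toReal * (μ (A j)).toReal| ≤ δ)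
    (hS : ∀ i < I, ∀ j < I,
      |(μ (S '' A i ∩ A j)).toReal - (μ (A i)).toReal * (μ (A j)).toReal| ≤ δ) :
    aDist μ A T S ≤ 8*δ + 8*(1/2:ℝ)^I := by
  have hsum2 : Summable (fun p : ℕ×ℕ => 2*δ*((1/2:ℝ)^p.1 * (1/2:ℝ)^p.2) +
      ((if I ≤ p.1 then (1/2:ℝ)^p.1 else 0) * (1/2:ℝ)^p.2 +
       (1/2:ℝ)^p.1 * (if I ≤ p.2 then (1/2:ℝ)^p.2 else 0))) :=
    (summable_prod_geo.mul_left _).add ((summable_prod_ite1 I).add (summable_prod_ite2 I))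
  have hterm : ∀ p : ℕ×ℕ, (1/2:ℝ)^(p.1+p.2) *
      |(μ (T '' A p.1 ∩ A p.2)).toReal - (μ (S '' A p.1 ∩ A p.2)).toReal| ≤
      2*δ*((1/2:ℝ)^p.1 * (1/2:ℝ)^p.2) +
      ((if I ≤ p.1 then (1/2:ℝ)^p.1 else 0) * (1/2:ℝ)^p.2 +
       (1/2:ℝ)^p.1 * (if I ≤ p.2 then (1/2:ℝ)^p.2 else 0)) := by
    intro p
    rw [pow_add]
    have hw : (0:ℝ) ≤ (1/2:ℝ)^p.1 * (1/2:ℝ)^p.2 := by positivity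
    have hib1 : (0:ℝ) ≤ (if I ≤ p.1 then (1/2:ℝ)^p.1 else 0) * (1/2:ℝ)^p.2 := by
      by_cases hI : I ≤ p.1 <;> simp [hI] <;> positivity
    have hib2 : (0:ℝ) ≤ (1/2:ℝ)^p.1 * (if I ≤ p.2 then (1/2:ℝ)^p.2 else 0) := by
      by_cases hI : I ≤ p.2 <;> simp [hI] <;> positivity
    rcases lt_or_ge p.1 I with hi | hi
    · rcases lt_or_ge p.2 I with hj | hj
      · have h1 := hT p.1 hi p.2 hj
        have h2 := hS p.1 hi p.2 hj
        have h3 : |(μ (T '' A p.1 ∩ A p.2)).toReal - (μ (S '' A p.1 ∩ A p.2)).toReal| ≤ 2*δ := by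
          have := abs_sub_le (μ (T '' A p.1 ∩ A p.2)).toReal
            ((μ (A p.1)).toReal * (μ (A p.2)).toReal) (μ (S '' A p.1 ∩ A p.2)).toReal
          rw [abs_sub_comm ((μ (A p.1)).toReal * (μ (A p.2)).toReal)] at this
          linarith
        nlinarith [abs_nonneg ((μ (T '' A p.1 ∩ A p.2)).toReal - (μ (S '' A p.1 ∩ A p.2)).toReal)]
      · rw [if_pos hj]
        have := abs_diff_le_one (μ := μ) (T '' A p.1 ∩ A p.2) (S '' A p.1 ∩ A p.2)
        nlinarith
    · rw [if_pos hi]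
      have := abs_diff_le_one (μ := μ) (T '' A p.1 ∩ A p.2) (S '' A p.1 ∩ A p.2)
      nlinarith
  refine le_trans (Summable.tsum_le_tsum hterm (summable_aDist_term (μ := μ) A T S) hsum2) ?_
  rw [Summable.tsum_add (summable_prod_geo.mul_left _) ((summable_prod_ite1 I).add (summable_prod_ite2 I)),
    Summable.tsum_add (summable_prod_ite1 I) (summable_prod_ite2 I), tsum_mul_left,
    tsum_prod_geo, tsum_prod_geo_ite1, tsum_prod_geo_ite2]
  nlinarith [pow_nonneg (by norm_num : (0:ℝ) ≤ 1/2) I]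

private lemma dDist_le (A : ℕ → Set X) (len : G → ℕ)
    (hsum : Summable fun g : G => (1/2:ℝ) ^ len g)
    (T S : G → X → X) (I N : ℕ) (δ η : ℝ) (hδ : 0 < δ) (hwI : (1/2:ℝ)^I ≤ δ)
    (htail : ∑' g : G, (if N < len g then (1/2:ℝ)^(len g) else 0) ≤ η)
    (hclose : ∀ g : G, (len g ≤ N ∨ len g⁻¹ ≤ N) → ∀ i < I,
      (μ ((T g '' A i) ∆ (S g '' A i))).toReal ≤ 2*δ) :
    dDist μ A len T S ≤ 12*δ*(∑' g : G, (1/2:ℝ)^(len g)) + 4*η := by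
  have hterm2 : ∀ (g : G) (i : ℕ), (0:ℝ) ≤ (1/2:ℝ)^i *
      ((μ ((T g '' A i) ∆ (S g '' A i))).toReal +
        (μ ((T g⁻¹ '' A i) ∆ (S g⁻¹ '' A i))).toReal) := by
    intro g i
    have h3 : (0:ℝ) ≤ (μ ((T g '' A i) ∆ (S g '' A i))).toReal := ENNReal.toReal_nonneg
    have h4 : (0:ℝ) ≤ (μ ((T g⁻¹ '' A i) ∆ (S g⁻¹ '' A i))).toReal := ENNReal.toReal_nonneg
    positivity
  have hbound2 : ∀ (g : G) (i : ℕ), (1/2:ℝ)^i *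
      ((μ ((T g '' A i) ∆ (S g '' A i))).toReal +
        (μ ((T g⁻¹ '' A i) ∆ (S g⁻¹ '' A i))).toReal) ≤ 2*(1/2:ℝ)^i := by
    intro g i
    have h1 := r_le_one (μ := μ) ((T g '' A i) ∆ (S g '' A i))
    have h2 := r_le_one (μ := μ) ((T g⁻¹ '' A i) ∆ (S g⁻¹ '' A i))
    have h3 : (0:ℝ) ≤ (μ ((T g '' A i) ∆ (S g '' A i))).toReal := ENNReal.toReal_nonneg
    have h4 : (0:ℝ) ≤ (μ ((T g⁻¹ '' A i) ∆ (S g⁻¹ '' A i))).toReal := ENNReal.toReal_nonneg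
    have hw : (0:ℝ) ≤ (1/2:ℝ)^i := by positivity
    nlinarith
  have hinSumm : ∀ g : G, Summable (fun i : ℕ => (1/2:ℝ)^i *
      ((μ ((T g '' A i) ∆ (S g '' A i))).toReal +
        (μ ((T g⁻¹ '' A i) ∆ (S g⁻¹ '' A i))).toReal)) := fun g =>
    Summable.of_nonneg_of_le (hterm2 g) (hbound2 g) (sum_geo.mul_left 2)
  have htwo : ∑' i : ℕ, 2*(1/2:ℝ)^i = 4 := by
    rw [tsum_mul_left, tsum_geometric_two]; norm_num
  have hin4 : ∀ g : G, (∑' i : ℕ, (1/2:ℝ)^i *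
      ((μ ((T g '' A i) ∆ (S g '' A i))).toReal +
        (μ ((T g⁻¹ '' A i) ∆ (S g⁻¹ '' A i))).toReal)) ≤ 4 := fun g =>
    (Summable.tsum_le_tsum (hbound2 g) (hinSumm g) (sum_geo.mul_left 2)).trans_eq htwo
  have hin0 : ∀ g : G, (0:ℝ) ≤ ∑' i : ℕ, (1/2:ℝ)^i *
      ((μ ((T g '' A i) ∆ (S g '' A i))).toReal +
        (μ ((T g⁻¹ '' A i) ∆ (S g⁻¹ '' A i))).toReal) := fun g => tsum_nonneg (hterm2 g)
  have hin12 : ∀ g : G, (len g ≤ N ∨ len g⁻¹ ≤ N) → (∑' i : ℕ, (1/2:ℝ)^i *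
      ((μ ((T g '' A i) ∆ (S g '' A i))).toReal +
        (μ ((T g⁻¹ '' A i) ∆ (S g⁻¹ '' A i))).toReal)) ≤ 12*δ := by
    intro g hg
    have hsumG : Summable (fun i : ℕ => 4*δ*(1/2:ℝ)^i + 2*(if I ≤ i then (1/2:ℝ)^i else 0)) :=
      (sum_geo.mul_left _).add ((sum_geo_ite I).mul_left 2)
    have hterm : ∀ i : ℕ, (1/2:ℝ)^i *
        ((μ ((T g '' A i) ∆ (S g '' A i))).toReal +
          (μ ((T g⁻¹ '' A i) ∆ (S g⁻¹ '' A i))).toReal) ≤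
        4*δ*(1/2:ℝ)^i + 2*(if I ≤ i then (1/2:ℝ)^i else 0) := by
      intro i
      have hw : (0:ℝ) ≤ (1/2:ℝ)^i := by positivity
      rcases lt_or_ge i I with hi | hi
      · rw [if_neg (by omega)]
        have h1 := hclose g hg i hi
        have h2 : (μ ((T g⁻¹ '' A i) ∆ (S g⁻¹ '' A i))).toReal ≤ 2*δ := by
          refine hclose g⁻¹ ?_ i hi
          rcases hg with h | h
          · exact Or.inr (by rwa [inv_inv])
          · exact Or.inl h
        have h3 : (0:ℝ) ≤ (μ ((T g '' A i) ∆ (S g '' A i))).toReal := ENNReal.toReal_nonneg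
        have h4 : (0:ℝ) ≤ (μ ((T g⁻¹ '' A i) ∆ (S g⁻¹ '' A i))).toReal := ENNReal.toReal_nonneg
        nlinarith
      · rw [if_pos hi]
        have h5 := hbound2 g i
        have h6 : (0:ℝ) ≤ 4*δ*(1/2:ℝ)^i := by positivity
        nlinarith
    refine (Summable.tsum_le_tsum hterm (hinSumm g) hsumG).trans ?_
    rw [Summable.tsum_add (sum_geo.mul_left _) ((sum_geo_ite I).mul_left 2), tsum_mul_left,
      tsum_mul_left, geo_tail, tsum_geometric_two]
    nlinarith [pow_nonneg (by norm_num : (0:ℝ) ≤ 1/2) I]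
  have houtSumm : Summable (fun g : G => (1/2:ℝ)^(len g) * ∑' i : ℕ, (1/2:ℝ)^i *
      ((μ ((T g '' A i) ∆ (S g '' A i))).toReal +
        (μ ((T g⁻¹ '' A i) ∆ (S g⁻¹ '' A i))).toReal)) := by
    refine Summable.of_nonneg_of_le (fun g => mul_nonneg (by positivity) (hin0 g))
      (fun g => ?_) (hsum.mul_left 4)
    calc (1/2:ℝ)^(len g) * (∑' i : ℕ, (1/2:ℝ)^i *
        ((μ ((T g '' A i) ∆ (S g '' A i))).toReal +
          (μ ((T g⁻¹ '' A i) ∆ (S g⁻¹ '' A i))).toReal))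
        ≤ (1/2:ℝ)^(len g) * 4 := mul_le_mul_of_nonneg_left (hin4 g) (by positivity)
      _ = 4*(1/2:ℝ)^(len g) := by ring
  have hiteSumm : Summable (fun g : G => if N < len g then (1/2:ℝ)^(len g) else 0) := by
    refine Summable.of_nonneg_of_le (fun g => ?_) (fun g => ?_) hsum
    · by_cases h : N < len g <;> simp [h]
    · by_cases h : N < len g <;> simp [h]
  have hFSumm : Summable (fun g : G => 12*δ*(1/2:ℝ)^(len g) +
      4*(if N < len g then (1/2:ℝ)^(len g) else 0)) :=
    (hsum.mul_left _).add (hiteSumm.mul_left 4)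
  have hterm : ∀ g : G, (1/2:ℝ)^(len g) * (∑' i : ℕ, (1/2:ℝ)^i *
      ((μ ((T g '' A i) ∆ (S g '' A i))).toReal +
        (μ ((T g⁻¹ '' A i) ∆ (S g⁻¹ '' A i))).toReal)) ≤
      12*δ*(1/2:ℝ)^(len g) + 4*(if N < len g then (1/2:ℝ)^(len g) else 0) := by
    intro g
    have hw : (0:ℝ) ≤ (1/2:ℝ)^(len g) := by positivity
    rcases le_or_gt (len g) N with hg | hg
    · rw [if_neg (by omega)]
      have := hin12 g (Or.inl hg)
      have := hin0 g
      nlinarith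
    · rw [if_pos hg]
      have := hin4 g
      have := hin0 g
      nlinarith [mul_nonneg (le_of_lt hδ) hw]
  show (∑' g : G, (1/2:ℝ)^(len g) * ∑' i : ℕ, (1/2:ℝ)^i *
      ((μ ((T g '' A i) ∆ (S g '' A i))).toReal +
        (μ ((T g⁻¹ '' A i) ∆ (S g⁻¹ '' A i))).toReal)) ≤ _
  refine (Summable.tsum_le_tsum hterm houtSumm hFSumm).trans ?_
  rw [Summable.tsum_add (hsum.mul_left _) (hiteSumm.mul_left 4), tsum_mul_left, tsum_mul_left]
  nlinarith [htail]

private lemma key_bound (A : ℕ → Set X) (len : G → ℕ)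
    (hsum : Summable fun g : G => (1/2:ℝ) ^ len g)
    (T S : G → X → X) (I N : ℕ) (δ η : ℝ) (hδ : 0 < δ) (hwI : (1/2:ℝ)^I ≤ δ)
    (htail : ∑' g : G, (if N < len g then (1/2:ℝ)^(len g) else 0) ≤ η)
    (hQT : ∀ g : G, N < len g → ∀ i < I, ∀ j < I,
      |(μ (T g '' A i ∩ A j)).toReal - (μ (A i)).toReal * (μ (A j)).toReal| ≤ δ)
    (hQS : ∀ g : G, N < len g → ∀ i < I, ∀ j < I,
      |(μ (S g '' A i ∩ A j)).toReal - (μ (A i)).toReal * (μ (A j)).toReal| ≤ δ)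
    (hclose : ∀ g : G, (len g ≤ N ∨ len g⁻¹ ≤ N) → ∀ i < I,
      (μ ((T g '' A i) ∆ (S g '' A i))).toReal ≤ 2*δ) :
    mDist μ A len T S ≤ 12*δ*(∑' g : G, (1/2:ℝ)^(len g)) + 4*η + 24*δ := by
  have hd := dDist_le (μ := μ) A len hsum T S I N δ η hδ hwI htail hclose
  have hna : Nonempty G := ⟨1⟩
  have hsup : (⨆ g : G, aDist μ A (T g) (S g)) ≤ 24*δ := by
    refine ciSup_le fun g => ?_
    rcases le_or_gt (len g) N with hg | hg
    · have := aDist_le_small (μ := μ) A (T g) (S g) I δ hδ (hclose g (Or.inl hg))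
      nlinarith [pow_nonneg (by norm_num : (0:ℝ) ≤ 1/2) I]
    · have := aDist_le_big (μ := μ) A (T g) (S g) I δ hδ
        (fun i hi j hj => hQT g hg i hi j hj) (fun i hi j hj => hQS g hg i hi j hj)
      nlinarith [pow_nonneg (by norm_num : (0:ℝ) ≤ 1/2) I]
  show dDist μ A len T S + (⨆ g : G, aDist μ A (T g) (S g)) ≤ _
  linarith

private lemma img_eq_preimage {μ : Measure X} {T : G → X → X} (hT : IsMPAction μ T)
    (g : G) (E : Set X) : T g '' E = T g⁻¹ ⁻¹' E := by
  obtain ⟨hmp, hmul, hone⟩ := hT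
  have hgg : ∀ x, T g⁻¹ (T g x) = x := fun x => by rw [← hmul, inv_mul_cancel, hone]
  have hgg' : ∀ x, T g (T g⁻¹ x) = x := fun x => by rw [← hmul, mul_inv_cancel, hone]
  ext x
  constructor
  · rintro ⟨y, hy, rfl⟩
    simpa [Set.mem_preimage, hgg] using hy
  · intro hx
    exact ⟨T g⁻¹ x, hx, hgg' x⟩

private lemma meas_img {μ : Measure X} {T : G → X → X} (hT : IsMPAction μ T) (g : G)
    {E : Set X} (hE : MeasurableSet E) : MeasurableSet (T g '' E) := by
  rw [img_eq_preimage hT]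
  exact (hT.1 g⁻¹).measurable hE

private lemma exists_tail_small (len : G → ℕ)
    (hsum : Summable fun g : G => (1/2:ℝ) ^ len g) {η : ℝ} (hη : 0 < η) :
    ∃ N₀ : ℕ, ∀ N, N₀ ≤ N →
      ∑' g : G, (if N < len g then (1/2:ℝ)^(len g) else 0) ≤ η := by
  obtain ⟨s, hs⟩ := summable_iff_vanishing.mp hsum (Metric.ball 0 η) (Metric.ball_mem_nhds 0 hη)
  refine ⟨s.sup len, fun N hN => ?_⟩
  have hnn : ∀ g : G, (0:ℝ) ≤ if N < len g then (1/2:ℝ)^(len g) else 0 := by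
    intro g; by_cases h : N < len g <;> simp [h]
  have hsm : Summable (fun g : G => if N < len g then (1/2:ℝ)^(len g) else 0) := by
    refine Summable.of_nonneg_of_le hnn (fun g => ?_) hsum
    by_cases h : N < len g <;> simp [h]
  refine Summable.tsum_le_of_sum_le hsm fun u => ?_
  classical
  rw [← Finset.sum_filter]
  have hdisj : Disjoint (u.filter (fun g => N < len g)) s := by
    rw [Finset.disjoint_left]
    intro g hg hgs
    have h1 : N < len g := (Finset.mem_filter.mp hg).2
    have h2 : len g ≤ s.sup len := Finset.le_sup hgs
    omega
  have := hs _ hdisj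
  rw [Metric.mem_ball, Real.dist_eq, sub_zero] at this
  exact (le_abs_self _).trans this.le

end MixSepAux

/-- **Separability.**  The set `M_G` of mixing actions of a countable group `G`, with the
lead metric `m`, is separable: there is a countable family of mixing actions such that
every mixing action is within `ε` of some member of the family, for every `ε > 0`. -/
theorem mixing_separable [Countable G]
    (μ : Measure X) [IsProbabilityMeasure μ]
    (A : ℕ → Set X) (hA : ∀ i, MeasurableSet (A i))
    (hgen : MeasurableSpace.generateFrom (Set.range A) = ‹MeasurableSpace X›)
    (len : G → ℕ) (hproper : ∀ n : ℕ, {g : G | len g ≤ n}.Finite)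
    (hsum : Summable fun g : G => ((1 : ℝ) / 2) ^ len g)
    (hexists : ∃ T : G → X → X, IsMPAction μ T ∧ Mixing μ len T) :
    ∃ D : ℕ → G → X → X,
      (∀ n, IsMPAction μ (D n) ∧ Mixing μ len (D n)) ∧
      ∀ S : G → X → X, IsMPAction μ S → Mixing μ len S →
        ∀ ε : ℝ, 0 < ε → ∃ n : ℕ, mDist μ A len (D n) S < ε := by
  classical
  obtain ⟨T₀, hT₀⟩ := hexists
  have hcg : MeasurableSpace.CountablyGenerated X :=
    ⟨⟨Set.range A, Set.countable_range A, hgen.symm⟩⟩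
  obtain ⟨𝒜, h𝒜c, h𝒜d⟩ := MeasureTheory.exists_countable_measureDense (μ := μ)
  obtain ⟨B, hB⟩ := h𝒜c.exists_eq_range h𝒜d.nonempty
  have hBapprox : ∀ E : Set X, MeasurableSet E → ∀ δ : ℝ, 0 < δ →
      ∃ n : ℕ, (μ (E ∆ B n)).toReal ≤ δ := by
    intro E hE δ hδ
    obtain ⟨t, ht, hlt⟩ := h𝒜d.approx E hE (measure_ne_top μ E) δ hδ
    rw [hB] at ht
    obtain ⟨n, rfl⟩ := ht
    exact ⟨n, ((ENNReal.lt_ofReal_iff_toReal_lt (measure_ne_top μ _)).mp hlt).le⟩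
  set W := ∑' g : G, (1/2:ℝ)^(len g) with hW
  have hW0 : 0 ≤ W := tsum_nonneg fun g => by positivity
  set δf : ℕ → ℝ := fun k => ((1:ℝ)/2)^k / (100*(W+1)) with hδf
  have hδpos : ∀ k : ℕ, 0 < δf k := by
    intro k
    rw [hδf]
    exact div_pos (by positivity) (by nlinarith)
  have hIex : ∀ k : ℕ, ∃ n : ℕ, ((1:ℝ)/2)^n < δf k :=
    fun k => exists_pow_lt_of_lt_one (hδpos k) (by norm_num)
  choose If hIf using hIex
  have hN₀ex : ∀ k : ℕ, ∃ N₀ : ℕ, ∀ N, N₀ ≤ N →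
      ∑' g : G, (if N < len g then (1/2:ℝ)^(len g) else 0) ≤ ((1:ℝ)/2)^k/100 :=
    fun k => exists_tail_small len hsum (by positivity)
  choose N₀f hN₀f using hN₀ex
  have hQex : ∀ (k : ℕ) (T : {T : G → X → X // IsMPAction μ T ∧ Mixing μ len T}),
      ∃ Nq : ℕ, ∀ g : G, Nq < len g → ∀ i, i < If k → ∀ j, j < If k →
        |(μ (T.1 g '' A i ∩ A j)).toReal - (μ (A i)).toReal * (μ (A j)).toReal| ≤ δf k := by
    intro k T
    have h : ∀ i j : ℕ, ∃ Nq : ℕ, ∀ g : G, Nq < len g →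
        |(μ (T.1 g '' A i ∩ A j)).toReal - (μ (A i)).toReal * (μ (A j)).toReal| ≤ δf k := by
      intro i j
      obtain ⟨Nq, hNq⟩ := T.2.2 (A i) (A j) (hA i) (hA j) (δf k) (hδpos k)
      exact ⟨Nq, fun g hg => (hNq g hg).le⟩
    choose f hf using h
    refine ⟨(Finset.range (If k) ×ˢ Finset.range (If k)).sup (fun p => f p.1 p.2),
      fun g hg i hi j hj => hf i j g (lt_of_le_of_lt ?_ hg)⟩
    exact Finset.le_sup (f := fun p : ℕ × ℕ => f p.1 p.2) (b := (i, j))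
      (Finset.mem_product.mpr ⟨Finset.mem_range.mpr hi, Finset.mem_range.mpr hj⟩)
  set NT : ℕ → {T : G → X → X // IsMPAction μ T ∧ Mixing μ len T} → ℕ :=
    fun k T => max (N₀f k) (Nat.find (hQex k T)) with hNT
  have hNT_spec : ∀ k T, ∀ g : G, NT k T < len g → ∀ i, i < If k → ∀ j, j < If k →
      |(μ (T.1 g '' A i ∩ A j)).toReal - (μ (A i)).toReal * (μ (A j)).toReal| ≤ δf k := by
    intro k T g hg
    simp only [hNT] at hg
    exact Nat.find_spec (hQex k T) g (lt_of_le_of_lt (le_max_right _ _) hg)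
  have hNT_ge : ∀ k T, N₀f k ≤ NT k T := by
    intro k T
    simp only [hNT]
    exact le_max_left _ _
  set φ : ℕ → (T : {T : G → X → X // IsMPAction μ T ∧ Mixing μ len T}) → G → ℕ → ℕ :=
    fun k T g i =>
      Nat.find (hBapprox (T.1 g '' A i) (meas_img T.2.1 g (hA i)) (δf k) (hδpos k)) with hφ
  have hφ_spec : ∀ k T g i, (μ ((T.1 g '' A i) ∆ B (φ k T g i))).toReal ≤ δf k := by
    intro k T g i
    simp only [hφ]
    exact Nat.find_spec (hBapprox (T.1 g '' A i) (meas_img T.2.1 g (hA i)) (δf k) (hδpos k))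
  have hdomfin : ∀ N : ℕ, {g : G | len g ≤ N ∨ len g⁻¹ ≤ N}.Finite := by
    intro N
    apply Set.Finite.subset ((hproper N).union ((hproper N).image Inv.inv))
    rintro g (h | h)
    · exact Or.inl h
    · exact Or.inr ⟨g⁻¹, h, inv_inv g⟩
  set dom : ℕ → Finset G := fun N => (hdomfin N).toFinset with hdom
  have hdommem : ∀ (N : ℕ) (g : G), (len g ≤ N ∨ len g⁻¹ ≤ N) → g ∈ dom N := by
    intro N g hg
    simp only [hdom, Set.Finite.mem_toFinset]
    exact hg
  set Φ : ℕ → {T : G → X → X // IsMPAction μ T ∧ Mixing μ len T} → ℕ × Finset (G × ℕ × ℕ) :=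
    fun k T => (NT k T,
      (dom (NT k T) ×ˢ Finset.range (If k)).image (fun p => (p.1, p.2, φ k T p.1 p.2))) with hΦ
  have hΦN : ∀ k T S', Φ k T = Φ k S' → NT k T = NT k S' := by
    intro k T S' h
    have := congrArg Prod.fst h
    simpa only [hΦ] using this
  have hclose : ∀ (k : ℕ) (T S' : {T : G → X → X // IsMPAction μ T ∧ Mixing μ len T}),
      Φ k T = Φ k S' →
      ∀ g : G, (len g ≤ NT k T ∨ len g⁻¹ ≤ NT k T) → ∀ i, i < If k →
        (μ ((T.1 g '' A i) ∆ (S'.1 g '' A i))).toReal ≤ 2 * δf k := by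
    intro k T S' h g hg i hi
    have hNeq : NT k T = NT k S' := hΦN k T S' h
    have h2 := congrArg Prod.snd h
    simp only [hΦ] at h2
    have hmem : (g, i, φ k T g i) ∈ (dom (NT k S') ×ˢ Finset.range (If k)).image
        (fun p : G × ℕ => (p.1, p.2, φ k S' p.1 p.2)) := by
      rw [← h2]
      exact Finset.mem_image.mpr ⟨(g, i), Finset.mem_product.mpr
        ⟨hdommem _ g hg, Finset.mem_range.mpr hi⟩, rfl⟩
    obtain ⟨p, hp, hpe⟩ := Finset.mem_image.mp hmem
    obtain ⟨pg, pi⟩ := p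
    simp only [Prod.mk.injEq] at hpe
    obtain ⟨he1, he2, he3⟩ := hpe
    rw [he1, he2] at he3
    have hTs := hφ_spec k T g i
    have hSs := hφ_spec k S' g i
    rw [he3] at hSs
    have tri := symmdiff_tri (μ := μ) (T.1 g '' A i) (B (φ k T g i)) (S'.1 g '' A i)
    rw [symmDiff_comm (B (φ k T g i)) (S'.1 g '' A i)] at tri
    linarith
  have hMbound : ∀ (k : ℕ) (T S' : {T : G → X → X // IsMPAction μ T ∧ Mixing μ len T}),
      Φ k T = Φ k S' →
      mDist μ A len T.1 S'.1 ≤ 12*(δf k)*W + 4*(((1:ℝ)/2)^k/100) + 24*(δf k) := by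
    intro k T S' h
    have hNeq : NT k T = NT k S' := hΦN k T S' h
    refine key_bound (μ := μ) A len hsum T.1 S'.1 (If k) (NT k T) (δf k) (((1:ℝ)/2)^k/100)
      (hδpos k) (hIf k).le (hN₀f k (NT k T) (hNT_ge k T)) ?_ ?_ ?_
    · exact fun g hg i hi j hj => hNT_spec k T g hg i hi j hj
    · rw [hNeq]
      exact fun g hg i hi j hj => hNT_spec k S' g hg i hi j hj
    · exact fun g hg i hi => hclose k T S' h g hg i hi
  obtain ⟨e, he⟩ := exists_surjective_nat (ℕ × ℕ × Finset (G × ℕ × ℕ))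
  set pick : ℕ × ℕ × Finset (G × ℕ × ℕ) →
      {T : G → X → X // IsMPAction μ T ∧ Mixing μ len T} := fun j =>
    if h : ∃ T : {T : G → X → X // IsMPAction μ T ∧ Mixing μ len T}, Φ j.1 T = j.2
      then h.choose else ⟨T₀, hT₀⟩ with hpick
  refine ⟨fun n => (pick (e n)).1, fun n => (pick (e n)).2, ?_⟩
  intro S hSmp hSmix ε hε
  obtain ⟨k, hk⟩ := exists_pow_lt_of_lt_one hε (by norm_num : (1:ℝ)/2 < 1)
  obtain ⟨n, hn⟩ := he (k, Φ k ⟨S, hSmp, hSmix⟩)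
  refine ⟨n, ?_⟩
  show mDist μ A len (pick (e n)).1 S < ε
  rw [hn]
  have hex : ∃ T : {T : G → X → X // IsMPAction μ T ∧ Mixing μ len T},
      Φ k T = Φ k ⟨S, hSmp, hSmix⟩ := ⟨⟨S, hSmp, hSmix⟩, rfl⟩
  have hpZ : Φ k (pick (k, Φ k ⟨S, hSmp, hSmix⟩)) = Φ k ⟨S, hSmp, hSmix⟩ := by
    simp only [hpick, dif_pos hex]
    exact hex.choose_spec
  have hb := hMbound k (pick (k, Φ k ⟨S, hSmp, hSmix⟩)) ⟨S, hSmp, hSmix⟩ hpZ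
  have hc : (0:ℝ) < ((1:ℝ)/2)^k := by positivity
  have hδWle : δf k * (W + 1) = ((1:ℝ)/2)^k/100 := by
    rw [hδf]
    field_simp
  have h1 : δf k * W ≤ ((1:ℝ)/2)^k/100 := by nlinarith [hδpos k]
  have h2 : δf k ≤ ((1:ℝ)/2)^k/100 := by nlinarith [hδpos k, mul_nonneg (hδpos k).le hW0]
  have hfinal : mDist μ A len (pick (k, Φ k ⟨S, hSmp, hSmix⟩)).1 S < ε := by
    have : mDist μ A len (pick (k, Φ k ⟨S, hSmp, hSmix⟩)).1 S ≤
        12*(δf k)*W + 4*(((1:ℝ)/2)^k/100) + 24*(δf k) := hb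
    nlinarith [hk]
  exact hfinal
end

section
/- Let G be a group, F a finite subset, and G̃ a finite subset of G such that #(g G̃ △ G̃) < (ε / (8 (#F)^2)) · #G̃ for every g ∈ F F^{-1}. Let {b_i} be a collection with G = ⊔_i F b_i (disjoint union), and let G' = ⊔ { F b_i : F b_i ⊆ G̃ }. Then #(G̃ \ G') < (ε/8) · #G̃, and consequently #(G̃ \ G') < (ε/7) · #G' when ε ≤ 1. -/
open Pointwise

/-- **Counting estimate for the trimmed tile.**  Let `G` be a group, `F` a finite subset,
and `G̃` a finite subset with `#(g • G̃ △ G̃) < (ε / (8 (#F)^2)) · #G̃` for every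
`g ∈ F * F⁻¹`.  Let `{b i}` tile `G` by right translates of `F`, and let `G'` be the
union of those tiles `F * b i` entirely contained in `G̃`.  Then
`#(G̃ \ G') < (ε/8) · #G̃`, and consequently `#(G̃ \ G') < (ε/7) · #G'` when `ε ≤ 1`. -/
theorem trimmed_tile_estimate {G : Type*} [Group G] [DecidableEq G]
    (F Gt G' : Finset G) (b : ℕ → G) (ε : ℝ) (hε : 0 < ε)
    (htile : ∀ x : G, ∃! i : ℕ, x ∈ F.image (· * b i))
    (hG' : ∀ x : G, x ∈ G' ↔ ∃ i : ℕ, F.image (· * b i) ⊆ Gt ∧ x ∈ F.image (· * b i))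
    (hFolner : ∀ g ∈ F * F⁻¹,
      ((((Gt.image (g * ·)) \ Gt) ∪ (Gt \ (Gt.image (g * ·)))).card : ℝ) <
        ε / (8 * (F.card : ℝ) ^ 2) * Gt.card) :
    ((Gt \ G').card : ℝ) < ε / 8 * Gt.card ∧
      (ε ≤ 1 → ((Gt \ G').card : ℝ) < ε / 7 * G'.card) := by
  classical
  -- F is nonempty
  obtain ⟨i₀, hi₀, -⟩ := htile 1
  obtain ⟨f₀, hf₀, -⟩ := Finset.mem_image.1 hi₀
  have hFne : F.Nonempty := ⟨f₀, hf₀⟩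
  have hFpos : (0 : ℝ) < (F.card : ℝ) := by exact_mod_cast Finset.card_pos.2 hFne
  have h1 : (1 : G) ∈ F * F⁻¹ :=
    Finset.mem_mul.2 ⟨f₀, hf₀, f₀⁻¹, Finset.inv_mem_inv hf₀, mul_inv_cancel f₀⟩
  -- subset of Gt
  have hG'sub : G' ⊆ Gt := by
    intro x hx
    obtain ⟨i, hs, hxi⟩ := (hG' x).1 hx
    exact hs hxi
  -- the key covering
  have hsub : Gt \ G' ⊆ (F * F⁻¹).biUnion (fun g => Gt.filter (fun x => g * x ∉ Gt)) := by
    intro x hx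
    rw [Finset.mem_sdiff] at hx
    obtain ⟨hxGt, hxG'⟩ := hx
    obtain ⟨i, hxi, -⟩ := htile x
    have hnot : ¬ (F.image (· * b i) ⊆ Gt) := fun hsubs =>
      hxG' ((hG' x).2 ⟨i, hsubs, hxi⟩)
    obtain ⟨y, hy, hyGt⟩ := Finset.not_subset.1 hnot
    obtain ⟨f, hf, rfl⟩ := Finset.mem_image.1 hxi
    obtain ⟨f', hf', rfl⟩ := Finset.mem_image.1 hy
    refine Finset.mem_biUnion.2 ⟨f' * f⁻¹, Finset.mul_mem_mul hf' (Finset.inv_mem_inv hf), ?_⟩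
    refine Finset.mem_filter.2 ⟨hxGt, ?_⟩
    simpa [mul_assoc, inv_mul_cancel_left] using hyGt
  have hfl : ∀ g, (Gt.filter (fun x => g * x ∉ Gt)).card ≤
      (((Gt.image (g * ·)) \ Gt) ∪ (Gt \ (Gt.image (g * ·)))).card := by
    intro g
    apply Finset.card_le_card_of_injOn (fun x => g * x)
    · intro x hx
      rw [Finset.mem_coe, Finset.mem_filter] at hx
      exact Finset.mem_union_left _ (Finset.mem_sdiff.2 ⟨Finset.mem_image_of_mem _ hx.1, hx.2⟩)
    · intro a _ c _ h
      exact mul_left_cancel h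
  have hcard1 : ((Gt \ G').card : ℝ) ≤
      ∑ g ∈ F * F⁻¹, ((Gt.filter (fun x => g * x ∉ Gt)).card : ℝ) := by
    have h := (Finset.card_le_card hsub).trans (Finset.card_biUnion_le)
    exact_mod_cast h
  have hsum : ∑ g ∈ F * F⁻¹, ((Gt.filter (fun x => g * x ∉ Gt)).card : ℝ) <
      ((F * F⁻¹).card : ℝ) * (ε / (8 * (F.card : ℝ) ^ 2) * Gt.card) := by
    have h := Finset.sum_lt_sum_of_nonempty ⟨1, h1⟩
      (fun g hg => lt_of_le_of_lt (Nat.cast_le.2 (hfl g)) (hFolner g hg))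
    simpa [Finset.sum_const, nsmul_eq_mul] using h
  have hFF : ((F * F⁻¹).card : ℝ) ≤ (F.card : ℝ) ^ 2 := by
    have h := Finset.card_mul_le (s := F) (t := F⁻¹)
    rw [Finset.card_inv] at h
    calc ((F * F⁻¹).card : ℝ) ≤ (F.card : ℝ) * F.card := by exact_mod_cast h
      _ = (F.card : ℝ) ^ 2 := (sq _).symm
  have hnn : (0 : ℝ) ≤ ε / (8 * (F.card : ℝ) ^ 2) * Gt.card := by positivity
  have hmain : ((Gt \ G').card : ℝ) < ε / 8 * Gt.card := by
    have h2 : ((F * F⁻¹).card : ℝ) * (ε / (8 * (F.card : ℝ) ^ 2) * Gt.card) ≤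
        (F.card : ℝ) ^ 2 * (ε / (8 * (F.card : ℝ) ^ 2) * Gt.card) :=
      mul_le_mul_of_nonneg_right hFF hnn
    have h3 : (F.card : ℝ) ^ 2 * (ε / (8 * (F.card : ℝ) ^ 2) * Gt.card) = ε / 8 * Gt.card := by
      field_simp
    linarith [hcard1, hsum]
  refine ⟨hmain, fun hε1 => ?_⟩
  have hsplit : ((Gt \ G').card : ℝ) + (G'.card : ℝ) = (Gt.card : ℝ) := by
    exact_mod_cast Finset.card_sdiff_add_card_eq_card hG'sub
  have hd0 : (0 : ℝ) ≤ ((Gt \ G').card : ℝ) := Nat.cast_nonneg _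
  have hp0 : (0 : ℝ) ≤ (G'.card : ℝ) := Nat.cast_nonneg _
  nlinarith [hmain, hsplit, mul_le_mul_of_nonneg_right hε1 (Nat.cast_nonneg Gt.card : (0:ℝ) ≤ Gt.card)]
end

section
/- Let G be a group, H ⊆ G finite with H = H^{-1}, and construct inductively g_1 ∉ H^5, C_1 ⊇ {g_1} ∪ H^5 finite symmetric, and generally g_n ∉ C_{n-1}^5 and C_n ⊇ {g_n} ∪ C_{n-1}^5 finite symmetric. Then for all distinct i, j: g_i g_j^{-1} ∉ H^{-1} H, i.e., the elements g_i lie in distinct right cosets of any translate structure determined by H^{-1}H. -/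
open Pointwise

/-- **Separation property of the inductively chosen sequence.**  Let `G` be an infinite
group, `H ⊆ G` a finite symmetric subset, and construct inductively finite symmetric sets
`C n` and elements `g n` with `C 0 = H`, `g (n+1) ∉ (C n)^5`, and
`C (n+1) ⊇ {g (n+1)} ∪ (C n)^5`.  Then for all distinct `i, j` one has
`g i * (g j)⁻¹ ∉ H⁻¹ * H`, i.e. the `g i` lie in distinct right cosets determined by
`H⁻¹ * H`. -/
theorem sequence_separation {G : Type*} [Group G] [Infinite G] [DecidableEq G]
    (H : Finset G) (hH : H⁻¹ = H)
    (C : ℕ → Finset G) (g : ℕ → G)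
    (hC0 : C 0 = H)
    (hCsym : ∀ n, (C n)⁻¹ = C n)
    (hgnot : ∀ n, g (n + 1) ∉ (C n) ^ 5)
    (hCsucc : ∀ n, insert (g (n + 1)) ((C n) ^ 5) ⊆ C (n + 1)) :
    ∀ i j : ℕ, i ≠ j → g (i + 1) * (g (j + 1))⁻¹ ∉ H⁻¹ * H := by
  have hpow5 : ∀ n : ℕ, (C n) ^ 5 = C n * C n * C n * C n * C n := by
    intro n
    rw [pow_succ, pow_succ, pow_succ, pow_succ, pow_one]
  have hmem5 : ∀ (n : ℕ) (a b c d e : G), a ∈ C n → b ∈ C n → c ∈ C n →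
      d ∈ C n → e ∈ C n → a * b * c * d * e ∈ (C n) ^ 5 := by
    intro n a b c d e ha hb hc hd he
    rw [hpow5]
    exact Finset.mul_mem_mul (Finset.mul_mem_mul (Finset.mul_mem_mul
      (Finset.mul_mem_mul ha hb) hc) hd) he
  have hinv : ∀ (n : ℕ) (a : G), a ∈ C n → a⁻¹ ∈ C n := by
    intro n a ha
    rw [← hCsym n]
    simpa using ha
  have hsub5 : ∀ n, C n ⊆ (C n) ^ 5 := by
    intro n a ha
    have h := hmem5 n a a⁻¹ a a⁻¹ a ha (hinv n a ha) ha (hinv n a ha) ha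
    simpa using h
  have hmono : ∀ n, C n ⊆ C (n + 1) := by
    intro n a ha
    exact hCsucc n (Finset.mem_insert_of_mem (hsub5 n ha))
  have hmono' : ∀ m n, m ≤ n → C m ⊆ C n := by
    intro m n hmn
    induction hmn with
    | refl => exact subset_rfl
    | step h ih => exact ih.trans (hmono _)
  have hgC : ∀ n, g (n + 1) ∈ C (n + 1) :=
    fun n => hCsucc n (Finset.mem_insert_self _ _)
  -- key: if i < j then the conclusion holds
  have key : ∀ i j : ℕ, i < j → g (i + 1) * (g (j + 1))⁻¹ ∉ H⁻¹ * H := by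
    intro i j hij hmem
    rw [hH, Finset.mem_mul] at hmem
    obtain ⟨h1, hh1, h2, hh2, heq⟩ := hmem
    have hHj : H ⊆ C j := hC0 ▸ hmono' 0 j (Nat.zero_le j)
    have hgi : g (i + 1) ∈ C j := hmono' (i + 1) j hij (hgC i)
    have hgj : g (j + 1) = h2⁻¹ * h1⁻¹ * g (i + 1) := by
      have h := heq
      rw [eq_comm, mul_inv_eq_iff_eq_mul] at h
      rw [h]
      group
    apply hgnot j
    rw [hgj]
    have := hmem5 j h2⁻¹ h1⁻¹ (g (i + 1)) (g (i + 1))⁻¹ (g (i + 1))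
      (hinv j h2 (hHj hh2)) (hinv j h1 (hHj hh1)) hgi (hinv j _ hgi) hgi
    convert this using 1
    group
  intro i j hij hmem
  rcases lt_or_gt_of_ne hij with h | h
  · exact key i j h hmem
  · apply key j i h
    rw [hH, Finset.mem_mul] at hmem ⊢
    obtain ⟨h1, hh1, h2, hh2, heq⟩ := hmem
    refine ⟨h2⁻¹, ?_, h1⁻¹, ?_, ?_⟩
    · rw [← hH]; simpa using hh2
    · rw [← hH]; simpa using hh1
    · rw [← mul_inv_rev, heq, mul_inv_rev, inv_inv]
end
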